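/- In the rank-one case, the support of σ^k_{x,t} = (μ^k_{x,t} + μ^k_{x,−t})/2 for t ≠ 0 equals [−|x|−t, −||x|−t|] ∪ [||x|−t|, |x|+t]; in particular it is contained in {ξ ∈ ℝ : |ξ−x| ≤ t} ∪ {ξ : |ξ+x| ≤ t}. -/
import Mathlib


open MeasureTheory Filter Topology

/-- Gegenbauer's kernel `m_α(x,y,z)` for the Bessel product formula (with the indicator
of `[|x−y|, x+y]` built in). -/
noncomputable def besselProdKernel (α x y : ℝ) (z : ℝ) : ℝ :=
  Set.indicator (Set.Icc |x - y| (x + y))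
    (fun z => 2 ^ (1 - 2 * α) * Real.Gamma (α + 1) /
        (Real.sqrt Real.pi * Real.Gamma (α + 1/2)) *
        ((z ^ 2 - (x - y) ^ 2) * ((x + y) ^ 2 - z ^ 2)) ^ (α - 1/2) /
        (x * y * z) ^ (2 * α)) z

/-- `σ_{z,x,t} = (z² + x² − t²)/(2zx)` for `z, x ≠ 0`, and `0` otherwise. -/
noncomputable def sigCoeff (z x t : ℝ) : ℝ :=
  if z ≠ 0 ∧ x ≠ 0 then (z ^ 2 + x ^ 2 - t ^ 2) / (2 * z * x) else 0

/-- The density of the rank-one Dunkl convolution measure `μ^k_{x,t}`: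
`m_{k−1/2}(|x|,|t|,|z|)|z|^{2k} (1 − σ_{x,t,z} + σ_{z,x,t} + σ_{z,t,x})/2`. -/
noncomputable def rankOneDens (k x t : ℝ) (z : ℝ) : ℝ :=
  besselProdKernel (k - 1/2) |x| |t| |z| * |z| ^ (2 * k) *
    ((1 - sigCoeff x t z + sigCoeff z x t + sigCoeff z t x) / 2)

/-- The density of the symmetrization `σ^k_{x,t} = (μ^k_{x,t} + μ^k_{x,−t})/2`. -/
noncomputable def rankOneSphMeanDens (k x t : ℝ) (z : ℝ) : ℝ :=
  (rankOneDens k x t z + rankOneDens k x (-t) z) / 2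

lemma aux_ne_nhdsNE (q p : ℝ) : {z : ℝ | z ≠ p} ∈ 𝓝[≠] q := by
  rcases eq_or_ne q p with rfl | h
  · exact self_mem_nhdsWithin
  · exact mem_nhdsWithin_of_mem_nhds (isOpen_compl_singleton.mem_nhds h)

lemma Icc_subset_closure_aux (u v p1 p2 : ℝ) (huv : u < v) (S : Set ℝ)
    (hS : ∀ z, u < z → z < v → z ≠ p1 → z ≠ p2 → z ∈ S) :
    Set.Icc u v ⊆ closure S := by
  rw [← closure_Ioo huv.ne]
  refine closure_minimal ?_ isClosed_closure
  intro q hq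
  rw [mem_closure_iff_frequently]
  have h1 : Set.Ioo u v ∈ 𝓝[≠] q := mem_nhdsWithin_of_mem_nhds (isOpen_Ioo.mem_nhds hq)
  have h4 : ∀ᶠ z in 𝓝[≠] q, z ∈ S := by
    filter_upwards [h1, aux_ne_nhdsNE q p1, aux_ne_nhdsNE q p2] with z hz hp1 hp2
    exact hS z hz.1 hz.2 hp1 hp2
  exact h4.frequently.filter_mono nhdsWithin_le_nhds

lemma kernel_pos (k a t z : ℝ) (hk : 0 < k) (ha : 0 < a) (ht : 0 < t)
    (h1 : |a - t| < z) (h2 : z < a + t) : 0 < besselProdKernel (k - 1/2) a t z := by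
  have hz0 : 0 < z := lt_of_le_of_lt (abs_nonneg _) h1
  unfold besselProdKernel
  rw [Set.indicator_of_mem (Set.mem_Icc.mpr ⟨h1.le, h2.le⟩)]
  have hab := abs_lt.mp h1
  have hP : 0 < (z ^ 2 - (a - t) ^ 2) * ((a + t) ^ 2 - z ^ 2) := by
    have e1 : (a - t) ^ 2 < z ^ 2 := sq_lt_sq' hab.1 hab.2
    have e2 : z ^ 2 < (a + t) ^ 2 := sq_lt_sq' (by linarith) h2
    nlinarith
  have hG1 : 0 < Real.Gamma (k - 1/2 + 1) := Real.Gamma_pos_of_pos (by linarith)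
  have hG2 : 0 < Real.Gamma (k - 1/2 + 1/2) := Real.Gamma_pos_of_pos (by linarith)
  have hQ : 0 < a * t * z := by positivity
  positivity

lemma sig_eval (u v w : ℝ) (hu : u ≠ 0) (hv : v ≠ 0) :
    sigCoeff u v w = (u ^ 2 + v ^ 2 - w ^ 2) / (2 * u * v) := if_pos ⟨hu, hv⟩

lemma dens_form (k x t z : ℝ) (hx : x ≠ 0) (ht : t ≠ 0) (hz : z ≠ 0) :
    rankOneSphMeanDens k x t z
      = besselProdKernel (k - 1/2) |x| |t| |z| * |z| ^ (2 * k) *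
          (((z + x) ^ 2 - t ^ 2) / (2 * z * x)) / 2 := by
  have hnt : (-t : ℝ) ≠ 0 := neg_ne_zero.mpr ht
  simp only [rankOneSphMeanDens, rankOneDens, abs_neg,
    sig_eval x t z hx ht, sig_eval z x t hz hx, sig_eval z t x hz ht,
    sig_eval x (-t) z hx hnt, sig_eval z x (-t) hz hx, sig_eval z (-t) x hz hnt]
  field_simp
  ring

/-- in the rank-one case, the support of `σ^k_{x,t}` (for `t ≠ 0`), i.e. the
closure of the set where its density does not vanish, equals
`[−|x|−t, −||x|−t|] ∪ [||x|−t|, |x|+t]`; in particular it is contained in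
`{ξ : |ξ−x| ≤ t} ∪ {ξ : |ξ+x| ≤ t}`. -/
theorem rankOne_spherical_mean_support (k : ℝ) (hk : 0 < k)
    (x : ℝ) (hx : x ≠ 0) (t : ℝ) (ht : 0 < t) :
    closure {z : ℝ | rankOneSphMeanDens k x t z ≠ 0}
        = Set.Icc (-|x| - t) (-|(|x| - t)|) ∪ Set.Icc |(|x| - t)| (|x| + t)
    ∧ Set.Icc (-|x| - t) (-|(|x| - t)|) ∪ Set.Icc |(|x| - t)| (|x| + t)
        ⊆ {ξ : ℝ | |ξ - x| ≤ t} ∪ {ξ : ℝ | |ξ + x| ≤ t} := by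
  have ha0 : 0 < |x| := abs_pos.mpr hx
  have habs : |(|x| - t)| < |x| + t := by
    rw [abs_lt]; constructor <;> linarith
  have habst : |t| = t := abs_of_pos ht
  -- nonvanishing on the open annulus away from the two exceptional points
  have hSne : ∀ z : ℝ, |(|x| - t)| < |z| → |z| < |x| + t → z ≠ t - x → z ≠ -t - x →
      rankOneSphMeanDens k x t z ≠ 0 := by
    intro z h1 h2 hp1 hp2
    have hz0 : z ≠ 0 := by
      intro h; rw [h, abs_zero] at h1; exact absurd h1 (not_lt.mpr (abs_nonneg _))
    rw [dens_form k x t z hx ht.ne' hz0, habst]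
    have hB := kernel_pos k |x| t |z| hk ha0 ht h1 h2
    have hW : (0:ℝ) < |z| ^ (2 * k) := Real.rpow_pos_of_pos (abs_pos.mpr hz0) _
    have h3 : z + x - t ≠ 0 := fun h => hp1 (by linarith)
    have h4 : z + x + t ≠ 0 := fun h => hp2 (by linarith)
    have hnum : (z + x) ^ 2 - t ^ 2 ≠ 0 := by
      have e : (z + x) ^ 2 - t ^ 2 = (z + x - t) * (z + x + t) := by ring
      rw [e]; exact mul_ne_zero h3 h4
    have hden : (2 : ℝ) * z * x ≠ 0 := by
      have : (2 : ℝ) ≠ 0 := two_ne_zero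
      exact mul_ne_zero (mul_ne_zero this hz0) hx
    exact div_ne_zero (mul_ne_zero (mul_ne_zero hB.ne' hW.ne') (div_ne_zero hnum hden))
      two_ne_zero
  -- the density vanishes outside the closed annulus
  have hSsub : {z : ℝ | rankOneSphMeanDens k x t z ≠ 0}
      ⊆ Set.Icc (-|x| - t) (-|(|x| - t)|) ∪ Set.Icc |(|x| - t)| (|x| + t) := by
    intro z hz
    simp only [Set.mem_setOf_eq] at hz
    have hmem : |(|x| - t)| ≤ |z| ∧ |z| ≤ |x| + t := by
      by_contra hmem
      apply hz
      have hker : besselProdKernel (k - 1/2) |x| |t| |z| = 0 := by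
        unfold besselProdKernel
        rw [Set.indicator_of_notMem]
        rw [habst, Set.mem_Icc]
        exact hmem
      simp only [rankOneSphMeanDens, rankOneDens, abs_neg, hker, zero_mul, add_zero, zero_div]
    rcases le_or_gt 0 z with hz0 | hz0
    · right
      rw [abs_of_nonneg hz0] at hmem
      exact Set.mem_Icc.mpr hmem
    · left
      rw [abs_of_neg hz0] at hmem
      exact Set.mem_Icc.mpr ⟨by linarith [hmem.2], by linarith [hmem.1]⟩
  constructor
  · apply le_antisymm
    · exact closure_minimal hSsub (isClosed_Icc.union isClosed_Icc)
    · apply Set.union_subset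
      · refine Icc_subset_closure_aux _ _ (t - x) (-t - x) (by linarith) _ ?_
        intro z h1 h2 hp1 hp2
        have hzneg : z < 0 := lt_of_lt_of_le h2 (by simp [neg_nonpos, abs_nonneg])
        refine hSne z ?_ ?_ hp1 hp2
        · rw [abs_of_neg hzneg]; linarith
        · rw [abs_of_neg hzneg]; linarith
      · refine Icc_subset_closure_aux _ _ (t - x) (-t - x) habs _ ?_
        intro z h1 h2 hp1 hp2
        have hzpos : 0 < z := lt_of_le_of_lt (abs_nonneg _) h1
        refine hSne z ?_ ?_ hp1 hp2 <;> rw [abs_of_pos hzpos]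
        · exact h1
        · exact h2
  · intro ξ hξ
    have l1 : |x| - t ≤ |(|x| - t)| := le_abs_self _
    have l2 : t - |x| ≤ |(|x| - t)| := by rw [abs_sub_comm]; exact le_abs_self _
    rcases abs_cases x with ⟨hax, _⟩ | ⟨hax, _⟩ <;> rcases hξ with h | h <;>
      rcases Set.mem_Icc.mp h with ⟨hl, hr⟩
    · right; rw [Set.mem_setOf_eq, abs_le]; constructor <;> linarith
    · left; rw [Set.mem_setOf_eq, abs_le]; constructor <;> linarith
    · left; rw [Set.mem_setOf_eq, abs_le]; constructor <;> linarith
    · right; rw [Set.mem_setOf_eq, abs_le]; constructor <;> linarith
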